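/- arXiv:1402.1995 — 2 statements merged into one kernel-verified Lean document; each statement's English description precedes it below -/
import Mathlib

section
/- With p(t) = p₀(1 - σ̂(t))^{1/(1+θ)} and I(t) = I₀(1 - σ̂(t))^{θ/(1+θ)} as in the one-item markdown solution, the total markdown revenue ∫₀^T p(t)·S(I(t),p(t))·σ(t) dt equals p₀·I₀·θ/(1+θ); in particular it is strictly less than the initial potential revenue p₀·I₀. -/
open MeasureTheory intervalIntegral Set

/-- The total markdown revenue of the closed-form one-item solution equals
p₀·I₀·θ/(1+θ), which is strictly less than the initial potential revenue p₀·I₀. -/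
theorem stmt7 (T θ p₀ I₀ S₀ α γ : ℝ) (σ : ℝ → ℝ)
    (hT : 0 < T) (hθ : 0 < θ) (hp₀ : 0 < p₀) (hI₀ : 0 < I₀)
    (hα : 0 < α) (hγ : γ < -1) (hθdef : θ = -(γ + 1) / α)
    (hσc : ContinuousOn σ (Set.Icc 0 T)) (hσnn : ∀ t ∈ Set.Icc 0 T, 0 ≤ σ t)
    (hσint : (∫ t in (0:ℝ)..T, σ t) = 1)
    (hS₀ : S₀ * I₀ ^ α * p₀ ^ γ = I₀ * θ / (1 + θ)) :
    (∫ t in (0:ℝ)..T,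
        (p₀ * (1 - ∫ x in (0:ℝ)..t, σ x) ^ (1 / (1 + θ))) *
          (S₀ * (I₀ * (1 - ∫ x in (0:ℝ)..t, σ x) ^ (θ / (1 + θ))) ^ α *
            (p₀ * (1 - ∫ x in (0:ℝ)..t, σ x) ^ (1 / (1 + θ))) ^ γ) * σ t)
      = p₀ * I₀ * θ / (1 + θ) ∧
    p₀ * I₀ * θ / (1 + θ) < p₀ * I₀ := by
  have h1θ : (0:ℝ) < 1 + θ := by linarith
  have hαθ : θ * α = -(γ + 1) := by
    rw [hθdef, div_mul_cancel₀ _ hα.ne']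
  constructor
  · -- integrability of σ on subintervals of [0,T]
    have hσi : ∀ a b : ℝ, a ∈ Icc (0:ℝ) T → b ∈ Icc (0:ℝ) T →
        IntervalIntegrable σ volume a b := by
      intro a b ha hb
      exact (hσc.mono (uIcc_subset_Icc ha hb)).intervalIntegrable
    -- key pointwise identity on [0, T)
    have key : ∀ t ∈ Ico (0:ℝ) T,
        (p₀ * (1 - ∫ x in (0:ℝ)..t, σ x) ^ (1 / (1 + θ))) *
          (S₀ * (I₀ * (1 - ∫ x in (0:ℝ)..t, σ x) ^ (θ / (1 + θ))) ^ α *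
            (p₀ * (1 - ∫ x in (0:ℝ)..t, σ x) ^ (1 / (1 + θ))) ^ γ) * σ t
        = (p₀ * I₀ * θ / (1 + θ)) * σ t := by
      intro t ht
      rcases eq_or_lt_of_le (hσnn t ⟨ht.1, ht.2.le⟩) with h0 | hpos
      · rw [← h0]; ring
      -- σ t > 0 ⇒ ∫_t^T σ > 0 ⇒ 1 - F t > 0
      set u : ℝ := 1 - ∫ x in (0:ℝ)..t, σ x with hu
      have hsplit : (∫ x in (0:ℝ)..t, σ x) + (∫ x in t..T, σ x) = 1 := by
        rw [intervalIntegral.integral_add_adjacent_intervals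
          (hσi 0 t ⟨le_refl 0, hT.le⟩ ⟨ht.1, ht.2.le⟩)
          (hσi t T ⟨ht.1, ht.2.le⟩ ⟨hT.le, le_refl T⟩), hσint]
      have htail : 0 < ∫ x in t..T, σ x := by
        -- find a right neighborhood where σ is positive
        have hcw : ContinuousWithinAt σ (Icc 0 T) t := hσc t ⟨ht.1, ht.2.le⟩
        have hev : ∀ᶠ x in nhdsWithin t (Icc 0 T), 0 < σ x :=
          hcw.eventually_const_lt hpos
        obtain ⟨δ, hδ, hball⟩ := Metric.mem_nhdsWithin_iff.mp hev
        set b : ℝ := min (t + δ) T with hb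
        have htb : t < b := lt_min (by linarith) ht.2
        have hbT : b ≤ T := min_le_right _ _
        have hbmem : b ∈ Icc (0:ℝ) T := ⟨by linarith [ht.1], hbT⟩
        have htmem : t ∈ Icc (0:ℝ) T := ⟨ht.1, ht.2.le⟩
        have h1 : 0 < ∫ x in t..b, σ x := by
          refine intervalIntegral_pos_of_pos_on (hσi t b htmem hbmem) ?_ htb
          intro x hx
          refine hball ⟨?_, ⟨ht.1.trans hx.1.le, hx.2.le.trans hbT⟩⟩
          rw [Metric.mem_ball, Real.dist_eq, abs_of_nonneg (by linarith [hx.1])]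
          have : x < t + δ := hx.2.trans_le (min_le_left _ _)
          linarith
        have h2 : 0 ≤ ∫ x in b..T, σ x := by
          apply intervalIntegral.integral_nonneg hbT
          intro x hx
          exact hσnn x ⟨le_trans hbmem.1 hx.1, hx.2⟩
        calc (0:ℝ) < ∫ x in t..b, σ x := h1
          _ ≤ (∫ x in t..b, σ x) + ∫ x in b..T, σ x := by linarith
          _ = ∫ x in t..T, σ x :=
            intervalIntegral.integral_add_adjacent_intervals
              (hσi t b htmem hbmem) (hσi b T hbmem ⟨hT.le, le_refl T⟩)
      have hupos : 0 < u := by rw [hu]; linarith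
      -- now the rpow algebra
      have hu0 : (0:ℝ) ≤ u := hupos.le
      rw [Real.mul_rpow hI₀.le (Real.rpow_nonneg hu0 _),
          Real.mul_rpow hp₀.le (Real.rpow_nonneg hu0 _),
          ← Real.rpow_mul hu0, ← Real.rpow_mul hu0]
      have hsum : u ^ (1 / (1 + θ)) * (u ^ (θ / (1 + θ) * α) * u ^ (1 / (1 + θ) * γ))
          = 1 := by
        rw [← Real.rpow_add hupos, ← Real.rpow_add hupos]
        have he : 1 / (1 + θ) + (θ / (1 + θ) * α + 1 / (1 + θ) * γ) = 0 := by
          field_simp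
          linarith [hαθ]
        rw [he, Real.rpow_zero]
      calc p₀ * u ^ (1 / (1 + θ)) *
            (S₀ * (I₀ ^ α * u ^ (θ / (1 + θ) * α)) *
              (p₀ ^ γ * u ^ (1 / (1 + θ) * γ))) * σ t
          = p₀ * (S₀ * I₀ ^ α * p₀ ^ γ) *
              (u ^ (1 / (1 + θ)) * (u ^ (θ / (1 + θ) * α) * u ^ (1 / (1 + θ) * γ))) *
              σ t := by ring
        _ = p₀ * I₀ * θ / (1 + θ) * σ t := by rw [hS₀, hsum]; ring
    -- turn pointwise (off a null set) identity into integral identity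
    have hae : ∀ᵐ x : ℝ, x ∈ Set.uIoc (0:ℝ) T →
        (p₀ * (1 - ∫ y in (0:ℝ)..x, σ y) ^ (1 / (1 + θ))) *
          (S₀ * (I₀ * (1 - ∫ y in (0:ℝ)..x, σ y) ^ (θ / (1 + θ))) ^ α *
            (p₀ * (1 - ∫ y in (0:ℝ)..x, σ y) ^ (1 / (1 + θ))) ^ γ) * σ x
        = (p₀ * I₀ * θ / (1 + θ)) * σ x := by
      have hTnull : (volume : Measure ℝ) {T} = 0 := measure_singleton T
      rw [ae_iff]
      refine measure_mono_null (fun x hx => ?_) hTnull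
      simp only [Set.mem_setOf_eq, Set.mem_singleton_iff] at hx ⊢
      push_neg at hx
      by_contra hxT
      obtain ⟨hmem, hne⟩ := hx
      rw [uIoc_of_le hT.le] at hmem
      exact hne (key x ⟨hmem.1.le, lt_of_le_of_ne hmem.2 hxT⟩)
    rw [intervalIntegral.integral_congr_ae hae, intervalIntegral.integral_const_mul,
        hσint, mul_one]
  · rw [div_lt_iff₀ h1θ]
    nlinarith [mul_pos hp₀ hI₀]
end

section
/- Let Γ be an invertible n×n real matrix, R a vector with all coordinates positive, c a vector, and suppose λ = -p·R⁻¹·(1 + (Γᵀ)⁻¹)·R componentwise equals -c (continuous-replenishment first-order condition λ = -c with p the price vector and R = p·S the revenue vector). Then the generalized Lerner rule holds: Γᵀ (l · R) = -R, where l = (p - c)/p is the vector of Lerner indices (componentwise operations). -/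
open Matrix

/-- In the continuous-replenishment case (λ = -c with
λ = -p·R⁻¹·(1 + (Γᵀ)⁻¹)·R componentwise), the generalized Lerner rule
Γᵀ(l·R) = -R holds, where l = (p-c)/p is the Lerner index vector. -/
theorem stmt8 {n : ℕ} (Γ : Matrix (Fin n) (Fin n) ℝ) (hΓ : IsUnit Γ.det)
    (p c R : Fin n → ℝ) (hp : ∀ i, 0 < p i) (hR : ∀ i, 0 < R i)
    (hlam : ∀ i, -(p i) * (R i)⁻¹ * ((1 + (Γᵀ)⁻¹).mulVec R) i = -(c i)) :
    Γᵀ.mulVec (fun i => (p i - c i) / p i * R i) = -R := by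
  have hΓT : IsUnit Γᵀ.det := by rwa [det_transpose]
  have hvec : (fun i => (p i - c i) / p i * R i) = -((Γᵀ)⁻¹.mulVec R) := by
    funext i
    have h := hlam i
    rw [add_mulVec, one_mulVec, Pi.add_apply] at h
    have hpi := (hp i).ne'
    have hRi := (hR i).ne'
    have : c i = p i + p i * (R i)⁻¹ * ((Γᵀ)⁻¹.mulVec R) i := by
      field_simp at h ⊢
      linarith
    rw [this]
    rw [Pi.neg_apply]
    field_simp
    ring
  rw [hvec, mulVec_neg, mulVec_mulVec, mul_nonsing_inv _ hΓT, one_mulVec]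
end
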